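/- Let Q = T[H_1, …, H_t] be a strong semicomplete composition with T ∉ T_1, and let S be a minimal separator of Q. Then Q − S contains vertices from at least two distinct digraphs H_i. -/

import Mathlib

/-- A digraph on vertex type `V`: an arbitrary set of arcs (ordered pairs). -/
structure Digr (V : Type*) where
  Adj : V → V → Prop

namespace Digr

variable {V : Type*}

/-- A digraph is strong if every vertex can reach every other vertex by a directed path. -/
def IsStrong (D : Digr V) : Prop := ∀ x y : V, Relation.ReflTransGen D.Adj x y

/-- A digraph is semicomplete if there is at least one arc between any two distinct vertices. -/
def IsSemicomplete (D : Digr V) : Prop := ∀ x y : V, x ≠ y → (D.Adj x y ∨ D.Adj y x)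

/-- The digraph obtained by deleting a set `S` of vertices. -/
def del (D : Digr V) (S : Set V) : Digr {v : V // v ∉ S} :=
  ⟨fun x y => D.Adj x.1 y.1⟩

/-- `S` is a separator of `D` if `D - S` is not strong. -/
def IsSeparator (D : Digr V) (S : Set V) : Prop := ¬ (D.del S).IsStrong

/-- A separator is minimal if no proper subset of it is a separator. -/
def IsMinimalSeparator (D : Digr V) (S : Set V) : Prop :=
  D.IsSeparator S ∧ ∀ S' : Set V, S' ⊂ S → ¬ D.IsSeparator S'

/-- A digraph is `k`-strong-connected if every separator has at least `k` vertices. -/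
def IsKStrong (D : Digr V) (k : ℕ) : Prop := ∀ S : Set V, D.IsSeparator S → k ≤ S.ncard

/-- The complement of the underlying undirected graph of a digraph. -/
def complG (D : Digr V) : SimpleGraph V where
  Adj x y := x ≠ y ∧ ¬ D.Adj x y ∧ ¬ D.Adj y x
  symm := ⟨fun x y h => ⟨Ne.symm h.1, h.2.2, h.2.1⟩⟩
  loopless := ⟨fun x h => h.1 rfl⟩

/-- `s` is the vertex set of a connected component of the complement of the
underlying undirected graph of `D`. -/
def IsComplComponent (D : Digr V) (s : Set V) : Prop :=
  s.Nonempty ∧ (∀ x ∈ s, ∀ y ∈ s, D.complG.Reachable x y) ∧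
    (∀ x ∈ s, ∀ y : V, D.complG.Reachable x y → y ∈ s)

/-- A (directed) path, given as its list of vertices. -/
def IsPathList (D : Digr V) (l : List V) : Prop :=
  l ≠ [] ∧ l.Nodup ∧ l.Chain' D.Adj

/-- A (directed) cycle, given as its list of vertices. -/
def IsCycleList (D : Digr V) (l : List V) : Prop :=
  2 ≤ l.length ∧ l.Nodup ∧ (l ++ l.take 1).Chain' D.Adj

/-- A Hamiltonian (directed) path. -/
def HasHamPath (D : Digr V) : Prop := ∃ l : List V, D.IsPathList l ∧ ∀ v : V, v ∈ l

/-- A Hamiltonian (directed) cycle. -/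
def HasHamCycle (D : Digr V) : Prop := ∃ l : List V, D.IsCycleList l ∧ ∀ v : V, v ∈ l

/-- A `k`-path subdigraph: `k` pairwise vertex-disjoint directed paths. -/
def IsKPathSub (D : Digr V) (k : ℕ) (P : Fin k → List V) : Prop :=
  (∀ j, D.IsPathList (P j)) ∧ ∀ j j' : Fin k, j ≠ j' → ∀ v : V, v ∈ P j → v ∉ P j'

/-- A cycle subdigraph: a collection of pairwise vertex-disjoint directed cycles. -/
def IsCycleSub (D : Digr V) (c : ℕ) (C : Fin c → List V) : Prop :=
  (∀ j, D.IsCycleList (C j)) ∧ ∀ j j' : Fin c, j ≠ j' → ∀ v : V, v ∈ C j → v ∉ C j'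

/-- The set of vertices covered by a family of paths/cycles. -/
def lverts {k : ℕ} (P : Fin k → List V) : Set V := {v : V | ∃ j, v ∈ P j}

/-- A maximum `k`-path subdigraph: one covering the largest number of vertices. -/
def IsMaxKPathSub (D : Digr V) (k : ℕ) (P : Fin k → List V) : Prop :=
  D.IsKPathSub k P ∧
    ∀ P' : Fin k → List V, D.IsKPathSub k P' → (lverts P').ncard ≤ (lverts P).ncard

/-- The path covering number: the least `k` such that `D` has a spanning
collection of `k` pairwise disjoint directed paths. -/
noncomputable def pc (D : Digr V) : ℕ :=
  sInf {k : ℕ | ∃ P : Fin k → List V, D.IsKPathSub k P ∧ ∀ v : V, ∃ j, v ∈ P j}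

/-- A digraph is acyclic if it has no (nontrivial) closed directed walk. -/
def IsAcyclic (D : Digr V) : Prop := ∀ v : V, ¬ Relation.TransGen D.Adj v v

/-- `D'` is a spanning subdigraph of `D` (same vertex set, a subset of the arcs). -/
def IsSpanningSubdigraph (D' D : Digr V) : Prop := ∀ x y : V, D'.Adj x y → D.Adj x y

/-- The number of arcs of a digraph. -/
noncomputable def arcCount (D : Digr V) : ℕ := {p : V × V | D.Adj p.1 p.2}.ncard

/-- The composition `T[H 0, …, H (t-1)]` of digraphs. -/
def comp {t : ℕ} (T : Digr (Fin t)) {β : Fin t → Type*} (H : ∀ i, Digr (β i)) :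
    Digr ((i : Fin t) × β i) :=
  ⟨fun x y => (∃ h : x.1 = y.1, (H y.1).Adj (h ▸ x.2) y.2) ∨ (x.1 ≠ y.1 ∧ T.Adj x.1 y.1)⟩

/-- The digraph `H_k(D)`: add vertices `x_1, …, x_k` (the left summand of `Fin k ⊕ Fin k`)
and `y_1, …, y_k` (the right summand), all arcs from `V(D)` to each `x_i`, from each `y_j`
to `V(D)`, and all arcs `x_i y_j`. -/
def HkD (D : Digr V) (k : ℕ) : Digr (V ⊕ (Fin k ⊕ Fin k)) :=
  ⟨fun x y =>
    match x, y with
    | Sum.inl a, Sum.inl b => D.Adj a b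
    | Sum.inl _, Sum.inr (Sum.inl _) => True
    | Sum.inr (Sum.inr _), Sum.inl _ => True
    | Sum.inr (Sum.inl _), Sum.inr (Sum.inr _) => True
    | _, _ => False⟩

/-- `ε(D)`: the least `k` such that `H_k(D)` is Hamiltonian. -/
noncomputable def eps (D : Digr V) : ℕ := sInf {k : ℕ | (D.HkD k).HasHamCycle}

/-- Membership in the class `𝒯₁`: some vertex `u` has arcs in both directions
to every other vertex. -/
def memT1 {t : ℕ} (T : Digr (Fin t)) : Prop :=
  ∃ u : Fin t, ∀ v : Fin t, v ≠ u → T.Adj u v ∧ T.Adj v u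

/-- `A ⇒ B`: every vertex of `A` dominates every vertex of `B`,
and there is no arc from `B` to `A`. -/
def DomStrict (D : Digr V) (A B : Set V) : Prop :=
  (∀ a ∈ A, ∀ b ∈ B, D.Adj a b) ∧ (∀ b ∈ B, ∀ a ∈ A, ¬ D.Adj b a)

/-- `s` is an independent set: the induced subdigraph has no arcs. -/
def IndepSet (D : Digr V) (s : Set V) : Prop := ∀ a ∈ s, ∀ b ∈ s, ¬ D.Adj a b

/-- The induced subdigraph on `s` contains a directed path of length 2. -/
def HasP2In (D : Digr V) (s : Set V) : Prop :=
  ∃ a ∈ s, ∃ b ∈ s, ∃ c ∈ s, a ≠ b ∧ b ≠ c ∧ a ≠ c ∧ D.Adj a b ∧ D.Adj b c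

/-- A digraph on `n` vertices is pancyclic if it has a cycle of every length
`k` with `3 ≤ k ≤ n`. -/
def Pancyclic [Fintype V] (D : Digr V) : Prop :=
  ∀ m : ℕ, 3 ≤ m → m ≤ Fintype.card V →
    ∃ l : List V, D.IsCycleList l ∧ l.length = m

/-- `D` has an out-branching: a spanning out-tree. -/
def HasOutBranching (D : Digr V) : Prop :=
  ∃ (B : Digr V) (r : V), B.IsSpanningSubdigraph D ∧
    (∀ v : V, Relation.ReflTransGen B.Adj r v) ∧
    (∀ z : V, ¬ B.Adj z r) ∧ (∀ v : V, v ≠ r → ∃! u : V, B.Adj u v)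

/-- `D` has an in-branching: a spanning in-tree. -/
def HasInBranching (D : Digr V) : Prop :=
  ∃ (B : Digr V) (r : V), B.IsSpanningSubdigraph D ∧
    (∀ v : V, Relation.ReflTransGen B.Adj v r) ∧
    (∀ z : V, ¬ B.Adj r z) ∧ (∀ v : V, v ≠ r → ∃! u : V, B.Adj v u)

end Digr

/-- In a strong semicomplete composition with `T ∉ 𝒯₁`, for any minimal
separator `S`, the remainder `Q - S` contains vertices from at least two distinct `H_i`. -/
theorem stmt_2 {t : ℕ} (ht : 2 ≤ t) (T : Digr (Fin t)) {β : Fin t → Type*}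
    [∀ i, Nonempty (β i)] (H : ∀ i, Digr (β i))
    (hsemi : T.IsSemicomplete) (hT1 : ¬ Digr.memT1 T)
    (hstrong : (Digr.comp T H).IsStrong)
    (S : Set ((i : Fin t) × β i)) (hS : (Digr.comp T H).IsMinimalSeparator S) :
    ∃ x y : (i : Fin t) × β i, x ∉ S ∧ y ∉ S ∧ x.1 ≠ y.1 := by
  by_contra hcon
  push_neg at hcon
  obtain ⟨hsep, hmin⟩ := hS
  rw [Digr.IsSeparator, Digr.IsStrong] at hsep
  push_neg at hsep
  obtain ⟨x, y, hxy⟩ := hsep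
  set i : Fin t := x.1.1 with hi
  rw [Digr.memT1] at hT1
  push_neg at hT1
  obtain ⟨v, hvne, hvnot⟩ := hT1 i
  have w : β v := Classical.arbitrary (β v)
  set W : (i : Fin t) × β i := ⟨v, w⟩ with hW
  have hfst : ∀ z : (i : Fin t) × β i, z ∉ S → z.1 = i := fun z hz => hcon z x.1 hz x.2
  have hWS : W ∈ S := by
    by_contra h'
    exact hvne (hfst W h')
  set S' : Set ((i : Fin t) × β i) := S \ {W} with hS'
  have hss : S' ⊂ S := by
    constructor
    · exact Set.diff_subset
    · intro hsub
      exact (hsub hWS).2 rfl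
  have hstrong' : (Digr.comp T H).del S' |>.IsStrong := by
    by_contra h'
    exact hmin S' hss h'
  have hx' : x.1 ∉ S' := fun h => x.2 h.1
  have hy' : y.1 ∉ S' := fun h => y.2 h.1
  have hpath := hstrong' ⟨x.1, hx'⟩ ⟨y.1, hy'⟩
  -- Key: no arc both ways between component i and v in T
  have hvi_ne : i ≠ v := fun h => hvne h.symm
  rcases hsemi i v hvi_ne with hiv | hvi
  · -- Case A: T.Adj i v holds, so ¬ T.Adj v i; no arc from W to any z ∉ S
    have hnvi : ¬ T.Adj v i := fun h => hvnot hiv h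
    have hnoout : ∀ z : (i : Fin t) × β i, z ∉ S → ¬ (Digr.comp T H).Adj W z := by
      intro z hz hadj
      rcases hadj with ⟨heq, _⟩ | ⟨_, hT⟩
      · exact hvne (heq.trans (hfst z hz))
      · rw [hfst z hz] at hT
        exact hnvi hT
    have key : ∀ a b : {p : (i : Fin t) × β i // p ∉ S'},
        Relation.ReflTransGen ((Digr.comp T H).del S').Adj a b →
        ∀ (ha : a.1 ∉ S) (hb : b.1 ∉ S),
        Relation.ReflTransGen ((Digr.comp T H).del S).Adj ⟨a.1, ha⟩ ⟨b.1, hb⟩ := by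
      intro a b hab
      induction hab with
      | refl => intro _ _; exact Relation.ReflTransGen.refl
      | @tail c d hac hcd ih =>
        intro ha hb
        have hc : c.1 ∉ S := by
          by_contra hcS
          have hcW : c.1 = W := by
            by_contra hne
            exact c.2 ⟨hcS, hne⟩
          exact hnoout d.1 hb (hcW ▸ hcd)
        exact Relation.ReflTransGen.tail (ih ha hc) hcd
    exact hxy (key _ _ hpath x.2 y.2)
  · -- Case B: T.Adj v i holds, so ¬ T.Adj i v; no arc into W from any z ∉ S
    have hniv : ¬ T.Adj i v := fun h => hvnot h hvi
    have hnoin : ∀ z : (i : Fin t) × β i, z ∉ S → ¬ (Digr.comp T H).Adj z W := by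
      intro z hz hadj
      rcases hadj with ⟨heq, _⟩ | ⟨_, hT⟩
      · exact hvne ((hfst z hz) ▸ heq).symm
      · rw [hfst z hz] at hT
        exact hniv hT
    have key : ∀ a b : {p : (i : Fin t) × β i // p ∉ S'},
        Relation.ReflTransGen ((Digr.comp T H).del S').Adj a b →
        ∀ (ha : a.1 ∉ S) (hb : b.1 ∉ S),
        Relation.ReflTransGen ((Digr.comp T H).del S).Adj ⟨a.1, ha⟩ ⟨b.1, hb⟩ := by
      intro a b hab
      induction hab using Relation.ReflTransGen.head_induction_on with
      | refl => intro _ _; exact Relation.ReflTransGen.refl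
      | @head c d hcd hdb ih =>
        intro ha hb
        have hd : d.1 ∉ S := by
          by_contra hdS
          have hdW : d.1 = W := by
            by_contra hne
            exact d.2 ⟨hdS, hne⟩
          exact hnoin c.1 ha (hdW ▸ hcd)
        exact Relation.ReflTransGen.head (show ((Digr.comp T H).del S).Adj ⟨c.1, ha⟩ ⟨d.1, hd⟩ from hcd) (ih hd hb)
    exact hxy (key _ _ hpath x.2 y.2)
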